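/- Let $0 \le t_0 \le T/2$ with $t_0 \le \sqrt 2$ and $T > \sqrt{2t_0^2 + 4}$. Then $\sup_{f \in \mathcal{L}_2(T)} f'(t_0) = \sqrt{2t_0^2 + 4} - t_0$. -/

import Mathlib

open Set Real

/-- Membership in Landau's class `𝓛₂(T)`. -/
def InL2 (T : ℝ) (f f' : ℝ → ℝ) : Prop :=
  (∀ t ∈ Icc 0 T, HasDerivWithinAt f (f' t) (Icc 0 T) t) ∧
  (∀ t ∈ Icc 0 T, |f t| ≤ 1) ∧
  LipschitzOnWith 1 f' (Icc 0 T)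

/-- monotonicity helper: if `f + φ` has nonnegative derivative on `(a,b) ⊆ (0,T)`,
then `f a + φ a ≤ f b + φ b`. -/
lemma landau_aux_mono {T a b : ℝ} {f f' φ φ' : ℝ → ℝ}
    (hd : ∀ t ∈ Icc 0 T, HasDerivWithinAt f (f' t) (Icc 0 T) t)
    (h0 : 0 ≤ a) (hab : a ≤ b) (hbT : b ≤ T)
    (hφ : ∀ x, HasDerivAt φ (φ' x) x)
    (hnn : ∀ x ∈ Ioo a b, 0 ≤ f' x + φ' x) :
    f a + φ a ≤ f b + φ b := by
  have hsub : Icc a b ⊆ Icc 0 T := Icc_subset_Icc h0 hbT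
  have hfc : ContinuousOn f (Icc 0 T) := fun t ht => (hd t ht).continuousWithinAt
  have hda : ∀ x ∈ Ioo a b, HasDerivAt (fun s => f s + φ s) (f' x + φ' x) x := by
    intro x hx
    have hxm : Icc (0:ℝ) T ∈ nhds x :=
      Icc_mem_nhds (lt_of_le_of_lt h0 hx.1) (lt_of_lt_of_le hx.2 hbT)
    exact ((hd x (mem_of_mem_nhds hxm)).hasDerivAt hxm).add (hφ x)
  have hmono : MonotoneOn (fun s => f s + φ s) (Icc a b) := by
    apply monotoneOn_of_deriv_nonneg (convex_Icc a b)
      ((hfc.mono hsub).add (fun x _ => (hφ x).continuousAt.continuousWithinAt))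
    · intro x hx
      rw [interior_Icc] at hx
      exact (hda x hx).differentiableAt.differentiableWithinAt
    · intro x hx
      rw [interior_Icc] at hx
      rw [show deriv (f + φ) x = f' x + φ' x from (hda x hx).deriv]
      exact hnn x hx
  exact hmono (left_mem_Icc.2 hab) (right_mem_Icc.2 hab) hab

theorem landau_pointwise_sup_middle (T t₀ : ℝ) (ht₀0 : 0 ≤ t₀)
    (ht₀T : t₀ ≤ T / 2) (ht₀2 : t₀ ≤ Real.sqrt 2)
    (hT : Real.sqrt (2 * t₀ ^ 2 + 4) < T) :
    IsGreatest {y : ℝ | ∃ f f' : ℝ → ℝ, InL2 T f f' ∧ y = f' t₀}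
      (Real.sqrt (2 * t₀ ^ 2 + 4) - t₀) := by
  set S : ℝ := Real.sqrt (2 * t₀ ^ 2 + 4) with hSdef
  set σ : ℝ := S - t₀ with hσdef
  have hS0 : 0 ≤ S := Real.sqrt_nonneg _
  have hS2 : S ^ 2 = 2 * t₀ ^ 2 + 4 := Real.sq_sqrt (by positivity)
  have ht2 : t₀ ^ 2 ≤ 2 := by
    nlinarith [Real.sq_sqrt (by norm_num : (0:ℝ) ≤ 2), Real.sqrt_nonneg 2]
  have hS2le : 2 ≤ S := by nlinarith
  have h2t₀S : 2 * t₀ ≤ S := by nlinarith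
  have hσ0 : 0 ≤ σ := by simp only [hσdef]; linarith
  have ht₀S : t₀ ≤ S := by linarith
  have hST : S ≤ T := le_of_lt hT
  have hkey : S * σ = 2 + (t₀ ^ 2 + σ ^ 2) / 2 := by
    simp only [hσdef]; nlinarith
  constructor
  · -- attainment
    set g : ℝ → ℝ := fun u => max (σ - |u - t₀|) 0 with hgdef
    have hgc : Continuous g :=
      (continuous_const.sub ((continuous_id.sub continuous_const).abs)).max continuous_const
    set F : ℝ → ℝ := fun s => -1 + ∫ u in (0:ℝ)..s, g u with hFdef
    have hgnn : ∀ u, 0 ≤ g u := fun u => le_max_right _ _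
    have hFd : ∀ t : ℝ, HasDerivAt F (g t) t := by
      intro t
      exact ((hgc.integral_hasStrictDerivAt 0 t).hasDerivAt).const_add (-1)
    have hFmono : ∀ a b : ℝ, a ≤ b → F a ≤ F b := by
      intro a b hab
      have h1 : (∫ u in (0:ℝ)..a, g u) + ∫ u in a..b, g u = ∫ u in (0:ℝ)..b, g u :=
        intervalIntegral.integral_add_adjacent_intervals
          (hgc.intervalIntegrable 0 a) (hgc.intervalIntegrable a b)
      have h2 : 0 ≤ ∫ u in a..b, g u :=
        intervalIntegral.integral_nonneg hab (fun u _ => hgnn u)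
      simp only [hFdef]
      linarith
    have hF0 : F 0 = -1 := by simp [hFdef]
    have hFT : F T = 1 := by
      have i1 : ∫ u in (0:ℝ)..t₀, g u = (σ - t₀) * t₀ + t₀ ^ 2 / 2 := by
        rw [intervalIntegral.integral_congr (g := fun u => (σ - t₀) + u)
          (by
            intro u hu
            rw [uIcc_of_le ht₀0] at hu
            have h1 : u - t₀ ≤ 0 := by linarith [hu.2]
            simp only [hgdef]
            rw [abs_of_nonpos h1, max_eq_left (by linarith [hu.1])]
            ring)]
        rw [intervalIntegral.integral_add intervalIntegrable_const
          intervalIntegral.intervalIntegrable_id, intervalIntegral.integral_const,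
          integral_id]
        simp; ring
      have i2 : ∫ u in t₀..S, g u = S * σ - (S ^ 2 - t₀ ^ 2) / 2 := by
        rw [intervalIntegral.integral_congr (g := fun u => S - u)
          (by
            intro u hu
            rw [uIcc_of_le ht₀S] at hu
            have h1 : 0 ≤ u - t₀ := by linarith [hu.1]
            simp only [hgdef]
            rw [abs_of_nonneg h1, max_eq_left (by simp only [hσdef]; linarith [hu.2])]
            ring)]
        rw [intervalIntegral.integral_sub intervalIntegrable_const
          intervalIntegral.intervalIntegrable_id, intervalIntegral.integral_const,
          integral_id]
        simp only [hσdef, smul_eq_mul]; ring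
      have i3 : ∫ u in S..T, g u = 0 := by
        rw [intervalIntegral.integral_congr (g := fun _ => (0:ℝ))
          (by
            intro u hu
            rw [uIcc_of_le hST] at hu
            have h1 : 0 ≤ u - t₀ := by linarith [hu.1]
            simp only [hgdef]
            rw [abs_of_nonneg h1, max_eq_right (by simp only [hσdef]; linarith [hu.1])])]
        simp
      have hsum1 : (∫ u in (0:ℝ)..t₀, g u) + ∫ u in t₀..S, g u = ∫ u in (0:ℝ)..S, g u :=
        intervalIntegral.integral_add_adjacent_intervals
          (hgc.intervalIntegrable 0 t₀) (hgc.intervalIntegrable t₀ S)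
      have hsum2 : (∫ u in (0:ℝ)..S, g u) + ∫ u in S..T, g u = ∫ u in (0:ℝ)..T, g u :=
        intervalIntegral.integral_add_adjacent_intervals
          (hgc.intervalIntegrable 0 S) (hgc.intervalIntegrable S T)
      have : ∫ u in (0:ℝ)..T, g u = 2 := by
        rw [← hsum2, ← hsum1, i1, i2, i3]; nlinarith
      simp only [hFdef]; rw [this]; norm_num
    refine ⟨F, g, ⟨?_, ?_, ?_⟩, ?_⟩
    · exact fun t _ => (hFd t).hasDerivWithinAt
    · intro t ht
      rw [abs_le]
      constructor
      · rw [← hF0]; exact hFmono 0 t ht.1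
      · rw [← hFT]; exact hFmono t T ht.2
    · apply LipschitzWith.lipschitzOnWith
      apply LipschitzWith.of_dist_le_mul
      intro x y
      simp only [Real.dist_eq, NNReal.coe_one, one_mul, hgdef]
      calc |max (σ - |x - t₀|) 0 - max (σ - |y - t₀|) 0|
          ≤ |(σ - |x - t₀|) - (σ - |y - t₀|)| := abs_max_sub_max_le_abs _ _ _
        _ = |(|y - t₀| - |x - t₀|)| := by congr 1; ring
        _ ≤ |(y - t₀) - (x - t₀)| := abs_abs_sub_abs_le_abs_sub _ _
        _ = |x - y| := by rw [abs_sub_comm]; congr 1; ring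
    · show σ = max (σ - |t₀ - t₀|) 0
      rw [sub_self, abs_zero, sub_zero, max_eq_left hσ0]
  · -- upper bound
    rintro y ⟨f, f', ⟨hd, hb, hlip⟩, rfl⟩
    rw [lipschitzOnWith_iff_dist_le_mul] at hlip
    set c : ℝ := f' t₀ with hcdef
    have hT0 : 0 < T := by linarith
    have ht₀mem : t₀ ∈ Icc (0:ℝ) T := ⟨ht₀0, by linarith⟩
    have hlip' : ∀ x ∈ Icc (0:ℝ) T, |f' x - c| ≤ |x - t₀| := by
      intro x hx
      have := hlip x hx t₀ ht₀mem
      simpa [Real.dist_eq] using this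
    -- first inequality on [0, t₀]
    have hA : f 0 + (-(c * 0) - (0 - t₀) ^ 2 / 2) ≤ f t₀ + (-(c * t₀) - (t₀ - t₀) ^ 2 / 2) := by
      apply landau_aux_mono hd le_rfl ht₀0 (by linarith)
        (φ := fun s => -(c * s) - (s - t₀) ^ 2 / 2) (φ' := fun x => -c - (x - t₀))
      · intro x
        have h1 : HasDerivAt (fun s : ℝ => (s - t₀) ^ 2 / 2) ((x - t₀)) x := by
          have := (((hasDerivAt_id x).sub_const t₀).pow 2).div_const 2
          simpa using this
        have h2 : HasDerivAt (fun s : ℝ => c * s) c x := by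
          simpa using (hasDerivAt_id x).const_mul c
        exact (h2.neg.sub h1)
      · intro x hx
        have hxm : x ∈ Icc (0:ℝ) T := ⟨le_of_lt hx.1, by linarith [hx.2]⟩
        have := abs_le.1 (hlip' x hxm)
        rw [abs_of_nonpos (by linarith [hx.2] : x - t₀ ≤ 0)] at this
        linarith [this.1]
    -- second inequality on [t₀, S]
    have hB : f t₀ + (-(c * t₀) + (t₀ - t₀) ^ 2 / 2) ≤ f S + (-(c * S) + (S - t₀) ^ 2 / 2) := by
      apply landau_aux_mono hd ht₀0 ht₀S hST
        (φ := fun s => -(c * s) + (s - t₀) ^ 2 / 2) (φ' := fun x => -c + (x - t₀))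
      · intro x
        have h1 : HasDerivAt (fun s : ℝ => (s - t₀) ^ 2 / 2) ((x - t₀)) x := by
          have := (((hasDerivAt_id x).sub_const t₀).pow 2).div_const 2
          simpa using this
        have h2 : HasDerivAt (fun s : ℝ => c * s) c x := by
          simpa using (hasDerivAt_id x).const_mul c
        exact (h2.neg.add h1)
      · intro x hx
        have hxm : x ∈ Icc (0:ℝ) T := ⟨by linarith [hx.1], by linarith [hx.2]⟩
        have := abs_le.1 (hlip' x hxm)
        rw [abs_of_nonneg (by linarith [hx.1] : 0 ≤ x - t₀)] at this
        linarith [this.1]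
    have hf0 := abs_le.1 (hb 0 ⟨le_rfl, le_of_lt hT0⟩)
    have hfS := abs_le.1 (hb S ⟨hS0, hST⟩)
    -- combine: c * S ≤ 2 + (t₀² + σ²)/2 = S * σ
    have hσsq : (S - t₀) ^ 2 = σ ^ 2 := by rw [hσdef]
    have e0 : (0 - t₀ : ℝ) ^ 2 = t₀ ^ 2 := by ring
    have e1 : (t₀ - t₀ : ℝ) ^ 2 = 0 := by ring
    rw [e0, e1] at hA
    rw [e1, hσsq] at hB
    have h1 : c * S ≤ σ * S := by
      clear_value S σ
      linarith [hA, hB, hf0.1, hfS.2, hkey]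
    exact le_of_mul_le_mul_right h1 (by linarith)
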